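/- Let S = k[x_1, …, x_n] be a polynomial ring over a field k, let u_1, …, u_r (r ≥ 2) be a regular sequence of homogeneous polynomials in S, and set I = (u_1, …, u_r) and J = (u_1, …, u_{r−1}). Then for every integer t ≥ 1, one has I^t = J^t + u_r·I^{t−1} and (u_r·I^{t−1}) ∩ J^t = u_r·J^t. -/

import Mathlib

open MvPolynomial

namespace PowRegAux

variable {R : Type} [CommRing R]

/-- Product of powers of elements of an ideal lies in the corresponding power. -/
lemma prod_pow_mem_pow {ι : Type} [DecidableEq ι] (J : Ideal R) (v : ι → R) (e : ι → ℕ)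
    (s : Finset ι) (hv : ∀ i ∈ s, v i ∈ J) :
    (∏ i ∈ s, v i ^ e i) ∈ J ^ (∑ i ∈ s, e i) := by
  induction s using Finset.induction with
  | empty => simp
  | insert _ _ hnot ih =>
    rename_i a s
    rw [Finset.prod_insert hnot, Finset.sum_insert hnot, pow_add]
    exact Ideal.mul_mem_mul (Ideal.pow_mem_pow (hv a (Finset.mem_insert_self a s)) _)
      (ih fun i hi => hv i (Finset.mem_insert_of_mem hi))

lemma degree_sum_eq {m : ℕ} {e : Fin m →₀ ℕ} {F : MvPolynomial (Fin m) R} {n : ℕ}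
    (hF : F.IsHomogeneous n) (he : coeff e F ≠ 0) : ∑ i, e i = n := by
  have h1 := hF he
  rw [Finsupp.weight_apply] at h1
  simp only [Pi.one_apply, smul_eq_mul, mul_one] at h1
  rwa [Finsupp.sum_fintype _ _ (fun _ => rfl)] at h1

lemma eval_mem_pow {m : ℕ} (v : Fin m → R) {F : MvPolynomial (Fin m) R} {n : ℕ}
    (hF : F.IsHomogeneous n) : eval v F ∈ (Ideal.span (Set.range v)) ^ n := by
  rw [eval_eq']
  refine Submodule.sum_mem _ fun e he => ?_
  have hd : ∑ i, e i = n := degree_sum_eq hF (mem_support_iff.mp he)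
  rw [← hd]
  exact Ideal.mul_mem_left _ _
    (prod_pow_mem_pow _ v e Finset.univ fun i _ => Ideal.subset_span ⟨i, rfl⟩)

lemma eval_mem_pow_succ {m : ℕ} (v : Fin m → R) {F : MvPolynomial (Fin m) R} {n : ℕ}
    (hF : F.IsHomogeneous n) (hc : ∀ e, coeff e F ∈ Ideal.span (Set.range v)) :
    eval v F ∈ (Ideal.span (Set.range v)) ^ (n + 1) := by
  rw [eval_eq']
  refine Submodule.sum_mem _ fun e he => ?_
  have hd : ∑ i, e i = n := degree_sum_eq hF (mem_support_iff.mp he)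
  rw [pow_succ']
  refine Ideal.mul_mem_mul (hc e) ?_
  rw [← hd]
  exact prod_pow_mem_pow _ v e Finset.univ fun i _ => Ideal.subset_span ⟨i, rfl⟩

lemma exists_homog_eval {m : ℕ} (v : Fin m → R) (s : ℕ) :
    ∀ x ∈ (Ideal.span (Set.range v)) ^ s,
      ∃ F : MvPolynomial (Fin m) R, F.IsHomogeneous s ∧ eval v F = x := by
  induction s with
  | zero =>
    intro x _
    exact ⟨C x, isHomogeneous_C _ _, eval_C _⟩
  | succ s ih =>
    intro x hx
    rw [pow_succ] at hx
    refine Submodule.mul_induction_on hx ?_ ?_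
    · intro a ha b hb
      obtain ⟨F, hF, hFa⟩ := ih a ha
      obtain ⟨c, hc⟩ := Ideal.mem_span_range_iff_exists_fun.mp hb
      refine ⟨F * ∑ i, C (c i) * X i, ?_, ?_⟩
      · have h1 : IsHomogeneous (∑ i, C (c i) * X i) 1 :=
          IsHomogeneous.sum _ _ _ fun i _ => isHomogeneous_C_mul_X _ _
        exact hF.mul h1
      · rw [map_mul, hFa, map_sum]
        simp only [map_mul, eval_C, eval_X]
        rw [hc]
    · rintro x y ⟨F, hF, hFx⟩ ⟨G, hG, hGy⟩
      exact ⟨F + G, hF.add hG, by rw [map_add, hFx, hGy]⟩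

lemma sup_pow_succ (K B : Ideal R) (t : ℕ) :
    (K ⊔ B) ^ (t + 1) = K ^ (t + 1) ⊔ B * (K ⊔ B) ^ t := by
  refine le_antisymm ?_ ?_
  · induction t with
    | zero => simp [Ideal.mul_top]
    | succ t ih =>
      calc (K ⊔ B) ^ (t + 2) = (K ⊔ B) ^ (t + 1) * (K ⊔ B) := pow_succ _ _
        _ ≤ (K ^ (t + 1) ⊔ B * (K ⊔ B) ^ t) * (K ⊔ B) := Ideal.mul_mono_left ih
        _ = K ^ (t + 1) * (K ⊔ B) ⊔ B * (K ⊔ B) ^ t * (K ⊔ B) := Ideal.sup_mul _ _ _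
        _ ≤ K ^ (t + 2) ⊔ B * (K ⊔ B) ^ (t + 1) := ?_
      refine sup_le ?_ ?_
      · rw [Ideal.mul_sup]
        refine sup_le ?_ ?_
        · rw [← pow_succ]; exact le_sup_left
        · calc K ^ (t + 1) * B = B * K ^ (t + 1) := mul_comm _ _
            _ ≤ B * (K ⊔ B) ^ (t + 1) :=
              Ideal.mul_mono_right (Ideal.pow_right_mono le_sup_left _)
          exact le_sup_right
      · rw [mul_assoc, ← pow_succ]
        exact le_sup_right
  · refine sup_le (Ideal.pow_right_mono le_sup_left _) ?_
    calc B * (K ⊔ B) ^ t ≤ (K ⊔ B) * (K ⊔ B) ^ t := Ideal.mul_mono_left le_sup_right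
      _ = (K ⊔ B) ^ (t + 1) := (pow_succ' _ _).symm

lemma mem_sup_pow_decomp {K : Ideal R} {y z : R} {t : ℕ}
    (hz : z ∈ (K ⊔ Ideal.span {y}) ^ (t + 1)) :
    ∃ a ∈ K ^ (t + 1), ∃ b ∈ (K ⊔ Ideal.span {y}) ^ t, z = a + y * b := by
  rw [sup_pow_succ] at hz
  obtain ⟨a, ha, c, hc, rfl⟩ := Submodule.mem_sup.mp hz
  obtain ⟨b, hb, rfl⟩ := Ideal.mem_span_singleton_mul.mp hc
  exact ⟨a, ha, b, hb, rfl⟩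

/-- `v 0` is the *last* element of the regular sequence `v (m-1), …, v 1, v 0`;
each `v i` is a nonzerodivisor modulo the ideal generated by the `v j`, `j > i`. -/
def RegAux {m : ℕ} (v : Fin m → R) : Prop :=
  ∀ (i : Fin m) (c : R), v i * c ∈ Ideal.span (v '' {j | i < j}) →
    c ∈ Ideal.span (v '' {j | i < j})

lemma tail_image_lt {m : ℕ} (v : Fin (m + 1) → R) (i : Fin m) :
    Fin.tail v '' {j | i < j} = v '' {j | i.succ < j} := by
  ext x
  constructor
  · rintro ⟨j, hj, rfl⟩
    exact ⟨j.succ, Fin.succ_lt_succ_iff.mpr hj, rfl⟩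
  · rintro ⟨j, hj, rfl⟩
    rcases Fin.eq_zero_or_eq_succ j with rfl | ⟨j', rfl⟩
    · exact absurd hj (by simp)
    · exact ⟨j', Fin.succ_lt_succ_iff.mp hj, rfl⟩

lemma image_zero_lt {m : ℕ} (v : Fin (m + 1) → R) :
    v '' {j | 0 < j} = Set.range (Fin.tail v) := by
  ext x
  constructor
  · rintro ⟨j, hj, rfl⟩
    rcases Fin.eq_zero_or_eq_succ j with rfl | ⟨j', rfl⟩
    · simp at hj
    · exact ⟨j', rfl⟩
  · rintro ⟨j, rfl⟩
    exact ⟨j.succ, j.succ_pos, rfl⟩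

lemma RegAux.tail {m : ℕ} {v : Fin (m + 1) → R} (h : RegAux v) : RegAux (Fin.tail v) := by
  intro i c hc
  rw [tail_image_lt] at hc ⊢
  exact h i.succ c hc

lemma RegAux.head {m : ℕ} {v : Fin (m + 1) → R} (h : RegAux v) (c : R)
    (hc : v 0 * c ∈ Ideal.span (Set.range (Fin.tail v))) :
    c ∈ Ideal.span (Set.range (Fin.tail v)) := by
  rw [← image_zero_lt] at hc ⊢
  exact h 0 c hc

/-- The quasi-regularity statement in degree `t`. -/
def QRst (R : Type) [CommRing R] (t : ℕ) : Prop :=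
  ∀ (m : ℕ) (v : Fin m → R), RegAux v →
    ∀ F : MvPolynomial (Fin m) R, F.IsHomogeneous t →
      eval v F ∈ (Ideal.span (Set.range v)) ^ (t + 1) →
      ∀ e, coeff e F ∈ Ideal.span (Set.range v)

/-- The colon-ideal consequence of quasi-regularity in lower degrees. -/
lemma colon_of_qr {m : ℕ} {v : Fin m → R} {f : R}
    (hf : ∀ c, f * c ∈ Ideal.span (Set.range v) → c ∈ Ideal.span (Set.range v))
    (hv : RegAux v) {n : ℕ} (hqr : ∀ s, s < n → QRst R s)
    {g : R} (hg : f * g ∈ (Ideal.span (Set.range v)) ^ n) :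
    g ∈ (Ideal.span (Set.range v)) ^ n := by
  set J := Ideal.span (Set.range v) with hJ
  suffices h : ∀ (j s : ℕ), s + j = n → g ∈ J ^ s → g ∈ J ^ n by
    refine h n 0 (by omega) ?_
    rw [pow_zero, Ideal.one_eq_top]
    exact Submodule.mem_top
  intro j
  induction j with
  | zero =>
    intro s hs hgs
    rw [Nat.add_zero] at hs
    subst hs
    exact hgs
  | succ j ih =>
    intro s hs hgs
    obtain ⟨F, hF, hFg⟩ := exists_homog_eval v s g hgs
    have h2 : eval v (C f * F) ∈ J ^ (s + 1) := by
      rw [map_mul, eval_C, hFg]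
      exact Ideal.pow_le_pow_right (by omega) hg
    have h3 : ∀ e, coeff e F ∈ J := by
      intro e
      have := hqr s (by omega) m v hv (C f * F) (hF.C_mul f) h2 e
      rw [coeff_C_mul] at this
      exact hf _ this
    have h4 : g ∈ J ^ (s + 1) := by
      rw [← hFg]
      exact eval_mem_pow_succ v hF h3
    exact ih (s + 1) (by omega) h4

lemma qr_zero : QRst R 0 := by
  intro m v hv F hF hmem e
  have hsupp : F.support ⊆ {0} := by
    intro d hd
    have := degree_sum_eq hF (mem_support_iff.mp hd)
    have hd0 : d = 0 := by
      ext i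
      have : ∀ i ∈ Finset.univ, d i = 0 := by
        intro i _
        by_contra h
        have h1 : 0 < ∑ j, d j := Finset.sum_pos' (fun _ _ => Nat.zero_le _)
          ⟨i, Finset.mem_univ i, Nat.pos_of_ne_zero h⟩
        omega
      simpa using this i (Finset.mem_univ i)
    simp [hd0]
  have heval : eval v F = coeff 0 F := by
    rw [eval_eq']
    rw [Finset.sum_subset hsupp (fun x _ hx => by
      rw [MvPolynomial.notMem_support_iff.mp hx, zero_mul])]
    simp
  rcases eq_or_ne e (0 : Fin m →₀ ℕ) with rfl | hne
  · rw [← heval]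
    rw [pow_one] at hmem
    exact hmem
  · rw [MvPolynomial.notMem_support_iff.mp (fun h => hne (Finset.mem_singleton.mp (hsupp h)))]
    exact Submodule.zero_mem _

lemma qr_succ (t : ℕ) (hIH : ∀ s, s ≤ t → QRst R s) : QRst R (t + 1) := by
  intro m
  induction m with
  | zero =>
    intro v hv F hF hmem e
    have hJ : Ideal.span (Set.range v) = ⊥ := by
      rw [Set.range_eq_empty v, Ideal.span_empty]
    rw [hJ] at hmem ⊢
    have h0 : eval v F = 0 := by
      have h1 : (⊥ : Ideal R) ^ (t + 1 + 1) ≤ ⊥ ^ 1 := Ideal.pow_le_pow_right (by omega)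
      simpa using h1 hmem
    have h1 : eval v F = coeff 0 F := by
      conv_lhs => rw [eq_C_of_isEmpty F]
      rw [eval_C]
    have he : e = 0 := Subsingleton.elim _ _
    rw [he, Submodule.mem_bot, ← h1, h0]
  | succ m ihm =>
    intro v hv F hF hmem
    set w : Fin m → R := Fin.tail v with hw
    set y : R := v 0 with hy
    set K : Ideal R := Ideal.span (Set.range w) with hK
    set J : Ideal R := Ideal.span (Set.range v) with hJdef
    have hyJ : y ∈ J := Ideal.subset_span ⟨0, rfl⟩
    have hKJ : K ≤ J := Ideal.span_le.mpr (by rintro x ⟨j, rfl⟩; exact Ideal.subset_span ⟨j.succ, rfl⟩)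
    have hJKB : J = K ⊔ Ideal.span {y} := by
      rw [hJdef, hK, ← Ideal.span_union]
      congr 1
      ext x
      simp only [Set.mem_union, Set.mem_range, Set.mem_singleton_iff]
      constructor
      · rintro ⟨j, rfl⟩
        rcases Fin.eq_zero_or_eq_succ j with rfl | ⟨j', rfl⟩
        · exact Or.inr rfl
        · exact Or.inl ⟨j', rfl⟩
      · rintro (⟨j, rfl⟩ | rfl)
        · exact ⟨j.succ, rfl⟩
        · exact ⟨0, rfl⟩
    have hcolonK : ∀ (n' : ℕ) (g' : R), n' ≤ t + 1 → y * g' ∈ K ^ n' → g' ∈ K ^ n' := by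
      intro n' g' hn' hg'
      exact colon_of_qr (fun c hc => hv.head c hc) hv.tail (fun s hs => hIH s (by omega)) hg'
    set P := finSuccEquiv R m F with hP
    set G := P.coeff 0 with hG
    set H := (finSuccEquiv R m).symm P.divX with hH
    have hPH : finSuccEquiv R m H = P.divX := by
      rw [hH]; exact AlgEquiv.apply_symm_apply _ _
    have hcoeffG : ∀ e : Fin m →₀ ℕ, coeff e G = coeff (e.cons 0) F := fun e =>
      finSuccEquiv_coeff_coeff e F 0
    have hcoeffH : ∀ (i : ℕ) (e : Fin m →₀ ℕ), coeff (e.cons i) H = coeff (e.cons (i + 1)) F := by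
      intro i e
      rw [← finSuccEquiv_coeff_coeff e H i, hPH, Polynomial.coeff_divX, finSuccEquiv_coeff_coeff]
    have hGhom : G.IsHomogeneous (t + 1) :=
      hF.finSuccEquiv_coeff_isHomogeneous 0 (t + 1) (by omega)
    have hHhom : H.IsHomogeneous t := by
      intro e he
      have he' : coeff ((Finsupp.tail e).cons (e 0 + 1)) F ≠ 0 := by
        rw [← hcoeffH (e 0) (Finsupp.tail e), Finsupp.cons_tail]
        exact he
      have h1 := hF he'
      rw [← Finsupp.cons_tail e]
      rw [Finsupp.weight_apply] at h1 ⊢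
      simp only [Pi.one_apply, smul_eq_mul, mul_one, Finsupp.sum_cons] at h1 ⊢
      omega
    have hvcons : v = Fin.cons y w := (Fin.cons_self_tail v).symm
    have hevalH : eval v H = Polynomial.eval y (Polynomial.map (eval w) P.divX) := by
      rw [← hPH]
      conv_lhs => rw [hvcons]
      exact eval_eq_eval_mv_eval' w y H
    have hevalF : eval v F = eval w G + y * eval v H := by
      conv_lhs => rw [hvcons]
      rw [eval_eq_eval_mv_eval' w y F, ← hP]
      conv_lhs => rw [← Polynomial.X_mul_divX_add P]
      rw [Polynomial.map_add, Polynomial.map_mul, Polynomial.map_X, Polynomial.map_C,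
        Polynomial.eval_add, Polynomial.eval_mul, Polynomial.eval_X, Polynomial.eval_C, hevalH]
      ring
    have hmem' : eval v F ∈ J ^ (t + 2) := hmem
    have hmem2 : eval v F ∈ (K ⊔ Ideal.span {y}) ^ (t + 2) := by rw [← hJKB]; exact hmem'
    obtain ⟨a, ha, b, hb, hab⟩ := mem_sup_pow_decomp hmem2
    rw [← hJKB] at hb
    have hstep3 : y * (eval v H - b) ∈ K ^ (t + 1) := by
      have h2 : eval w G + y * eval v H = a + y * b := by rw [← hevalF]; exact hab
      have heq : y * (eval v H - b) = a - eval w G := by linear_combination h2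
      rw [heq]
      exact sub_mem (Ideal.pow_le_pow_right (by omega) ha) (eval_mem_pow w hGhom)
    have hHsub : eval v H - b ∈ K ^ (t + 1) := hcolonK (t + 1) _ (le_refl _) hstep3
    have hHJ : eval v H ∈ J ^ (t + 1) := by
      have h1 : eval v H = (eval v H - b) + b := by ring
      rw [h1]
      exact add_mem (Ideal.pow_right_mono hKJ _ hHsub) hb
    have hcoH : ∀ e, coeff e H ∈ J := fun e => hIH t (le_refl t) (m + 1) v hv H hHhom hHJ e
    have hyH : y * eval v H ∈ J ^ (t + 2) := by
      have h5 : eval v H ∈ J ^ (t + 1) := eval_mem_pow_succ v hHhom hcoH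
      have h6 : J ^ (t + 2) = J * J ^ (t + 1) := pow_succ' J (t + 1)
      rw [h6]
      exact Ideal.mul_mem_mul hyJ h5
    have hGmem : eval w G ∈ J ^ (t + 2) := by
      have h1 : eval w G = eval v F - y * eval v H := by rw [hevalF]; ring
      rw [h1]
      exact sub_mem hmem' hyH
    have hGmem2 : eval w G ∈ (K ⊔ Ideal.span {y}) ^ (t + 2) := by rw [← hJKB]; exact hGmem
    obtain ⟨a', ha', b', hb', hab'⟩ := mem_sup_pow_decomp hGmem2
    rw [← hJKB] at hb'
    have hb'K : b' ∈ K ^ (t + 1) := by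
      refine hcolonK (t + 1) b' (le_refl _) ?_
      have heq : y * b' = eval w G - a' := by rw [hab']; ring
      rw [heq]
      exact sub_mem (eval_mem_pow w hGhom) (Ideal.pow_le_pow_right (by omega) ha')
    obtain ⟨D, hD, hDb'⟩ := exists_homog_eval w (t + 1) b' hb'K
    have hGD : eval w (G - C y * D) ∈ K ^ (t + 2) := by
      rw [map_sub, map_mul, eval_C, hDb']
      have heq : eval w G - y * b' = a' := by rw [hab']; ring
      rw [heq]
      exact ha'
    have hGDhom : (G - C y * D).IsHomogeneous (t + 1) := hGhom.sub (hD.C_mul y)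
    have hcoGD : ∀ e, coeff e (G - C y * D) ∈ K := fun e => ihm w hv.tail _ hGDhom hGD e
    have hcoG : ∀ e, coeff e G ∈ J := by
      intro e
      have h1 := hcoGD e
      rw [coeff_sub, coeff_C_mul] at h1
      have h2 : coeff e G = (coeff e G - y * coeff e D) + y * coeff e D := by ring
      rw [h2]
      exact add_mem (hKJ h1) (Ideal.mul_mem_right _ _ hyJ)
    intro e
    by_cases h0 : e 0 = 0
    · rw [← Finsupp.cons_tail e, h0, ← hcoeffG]
      exact hcoG _
    · obtain ⟨i, h0⟩ := Nat.exists_eq_succ_of_ne_zero h0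
      rw [← Finsupp.cons_tail e, h0, ← hcoeffH]
      exact hcoH _

lemma qr_all (t : ℕ) : QRst R t := by
  induction t using Nat.strong_induction_on with
  | _ t hIH =>
    cases t with
    | zero => exact qr_zero
    | succ t' => exact qr_succ t' fun s hs => hIH s (Nat.lt_succ_of_le hs)

lemma ofList_take_ofFn {r : ℕ} (u : Fin r → R) (i : ℕ) (hi : i ≤ r) :
    Ideal.ofList ((List.ofFn u).take i) = Ideal.span (u '' {j : Fin r | (j : ℕ) < i}) := by
  have hset : {a | a ∈ (List.ofFn u).take i} = u '' {j : Fin r | (j : ℕ) < i} := by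
    ext x
    constructor
    · intro hx
      obtain ⟨j, hj, hx⟩ := List.mem_iff_getElem.mp hx
      have hj2 := hj
      rw [List.length_take, List.length_ofFn] at hj2
      have hj' : j < r := by omega
      refine ⟨⟨j, hj'⟩, ?_, ?_⟩
      · show j < i
        omega
      · rw [← hx, List.getElem_take, List.getElem_ofFn]
    · rintro ⟨j, hj, rfl⟩
      refine List.mem_iff_getElem.mpr ⟨(j : ℕ), ?_, ?_⟩
      · rw [List.length_take, List.length_ofFn]
        exact lt_min hj j.isLt
      · rw [List.getElem_take, List.getElem_ofFn]
  exact congrArg Ideal.span hset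

lemma colon_of_smulRegular {I : Ideal R} {f : R}
    (h : IsSMulRegular (R ⧸ (I • (⊤ : Submodule R R))) f) {c : R} (hc : f * c ∈ I) :
    c ∈ I := by
  have hI : I • (⊤ : Submodule R R) = I := by rw [Ideal.smul_eq_mul, Ideal.mul_top]
  have h1 : f • (Submodule.Quotient.mk c : R ⧸ (I • (⊤ : Submodule R R)))
      = f • (0 : R ⧸ (I • (⊤ : Submodule R R))) := by
    rw [smul_zero, ← Submodule.Quotient.mk_smul, Submodule.Quotient.mk_eq_zero, hI]
    simpa [smul_eq_mul] using hc
  have h2 := h h1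
  rw [Submodule.Quotient.mk_eq_zero, hI] at h2
  exact h2

end PowRegAux

set_option maxHeartbeats 1000000 in
/-- **Lemma.** Let `u_1, ..., u_r` (`r >= 2`) be a regular sequence of homogeneous
polynomials in `S = k[x_1, ..., x_n]`, `I = (u_1, ..., u_r)` and `J = (u_1, ..., u_{r-1})`.
Then for all `t >= 1` one has `I^t = J^t + u_r I^{t-1}` and
`(u_r I^{t-1}) cap J^t = u_r J^t`. -/
theorem pow_regularSequence_ideal_decomposition
    (k : Type) [Field k] (n r : ℕ) (hr : 2 ≤ r)
    (u : Fin r → MvPolynomial (Fin n) k)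
    (d : Fin r → ℕ)
    (hhom : ∀ i : Fin r, (u i).IsHomogeneous (d i))
    (hreg : RingTheory.Sequence.IsRegular (MvPolynomial (Fin n) k) (List.ofFn u))
    (I J : Ideal (MvPolynomial (Fin n) k))
    (hI : I = Ideal.span (Set.range u))
    (hJ : J = Ideal.span (u '' {i : Fin r | (i : ℕ) < r - 1}))
    (t : ℕ) (ht : 1 ≤ t) :
    I ^ t = J ^ t ⊔ Ideal.span {u ⟨r - 1, by omega⟩} * I ^ (t - 1)
    ∧ (Ideal.span {u ⟨r - 1, by omega⟩} * I ^ (t - 1)) ⊓ J ^ t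
        = Ideal.span {u ⟨r - 1, by omega⟩} * J ^ t := by
  subst hI hJ
  have hwreg := hreg.toIsWeaklyRegular
  have colonFact : ∀ (i : ℕ) (hi : i < r) (c : MvPolynomial (Fin n) k),
      u ⟨i, hi⟩ * c ∈ Ideal.span (u '' {j : Fin r | (j : ℕ) < i}) →
      c ∈ Ideal.span (u '' {j : Fin r | (j : ℕ) < i}) := by
    intro i hi c hc
    have hlen : i < (List.ofFn u).length := by rw [List.length_ofFn]; exact hi
    have h1 := hwreg.regular_mod_prev i hlen
    rw [List.getElem_ofFn] at h1
    rw [PowRegAux.ofList_take_ofFn u i (le_of_lt hi)] at h1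
    exact PowRegAux.colon_of_smulRegular h1 hc
  obtain ⟨t', rfl⟩ : ∃ t', t = t' + 1 := ⟨t - 1, by omega⟩
  simp only [Nat.add_sub_cancel]
  have hrange_u : Set.range u
      = (u '' {i : Fin r | (i : ℕ) < r - 1}) ∪ {u ⟨r - 1, by omega⟩} := by
    ext x
    simp only [Set.mem_range, Set.mem_union, Set.mem_image, Set.mem_setOf_eq,
      Set.mem_singleton_iff]
    constructor
    · rintro ⟨j, rfl⟩
      by_cases hj : (j : ℕ) < r - 1
      · exact Or.inl ⟨j, hj, rfl⟩
      · refine Or.inr (congrArg u (Fin.ext ?_))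
        have := j.isLt
        exact (by omega : (j : ℕ) = r - 1).symm ▸ rfl
    · rintro (⟨j, _, rfl⟩ | rfl)
      · exact ⟨j, rfl⟩
      · exact ⟨⟨r - 1, by omega⟩, rfl⟩
  have hIJ : Ideal.span (Set.range u)
      = Ideal.span (u '' {i : Fin r | (i : ℕ) < r - 1}) ⊔ Ideal.span {u ⟨r - 1, by omega⟩} := by
    rw [hrange_u, Ideal.span_union]
  constructor
  · rw [hIJ, PowRegAux.sup_pow_succ]
  · set v : Fin (r - 1) → MvPolynomial (Fin n) k :=
      fun j => u ⟨r - 2 - (j : ℕ), by omega⟩ with hv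
    have hvreg : PowRegAux.RegAux v := by
      intro j c hc
      have himg : v '' {j' | j < j'} = u '' {l : Fin r | (l : ℕ) < r - 2 - (j : ℕ)} := by
        ext x
        simp only [Set.mem_image, Set.mem_setOf_eq]
        constructor
        · rintro ⟨j', hj', rfl⟩
          have h1 := j'.isLt
          have h2 : (j : ℕ) < (j' : ℕ) := hj'
          exact ⟨⟨r - 2 - (j' : ℕ), by omega⟩,
            by simpa using (by omega : r - 2 - (j' : ℕ) < r - 2 - (j : ℕ)), rfl⟩
        · rintro ⟨l, hl, rfl⟩
          have h1 := j.isLt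
          refine ⟨⟨r - 2 - (l : ℕ), by omega⟩, ?_, ?_⟩
          · show (j : ℕ) < r - 2 - (l : ℕ)
            omega
          · exact congrArg u (Fin.ext (show r - 2 - (r - 2 - (l : ℕ)) = (l : ℕ) by omega))
      rw [himg] at hc ⊢
      exact colonFact (r - 2 - (j : ℕ)) (by omega) c hc
    have hrangev : Set.range v = u '' {i : Fin r | (i : ℕ) < r - 1} := by
      ext x
      simp only [Set.mem_range, Set.mem_image, Set.mem_setOf_eq]
      constructor
      · rintro ⟨j, rfl⟩
        have h1 := j.isLt
        exact ⟨⟨r - 2 - (j : ℕ), by omega⟩,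
          by simpa using (by omega : r - 2 - (j : ℕ) < r - 1), rfl⟩
      · rintro ⟨l, hl, rfl⟩
        exact ⟨⟨r - 2 - (l : ℕ), by omega⟩,
          congrArg u (Fin.ext (show r - 2 - (r - 2 - (l : ℕ)) = (l : ℕ) by omega))⟩
    have hspanv : Ideal.span (Set.range v)
        = Ideal.span (u '' {i : Fin r | (i : ℕ) < r - 1}) := by rw [hrangev]
    refine le_antisymm ?_ ?_
    · intro x hx
      obtain ⟨hx1, hx2⟩ := Submodule.mem_inf.mp hx
      obtain ⟨g, hg, rfl⟩ := Ideal.mem_span_singleton_mul.mp hx1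
      have hfg : u ⟨r - 1, by omega⟩ * g ∈ Ideal.span (Set.range v) ^ (t' + 1) := by
        rw [hspanv]; exact hx2
      have hgJ : g ∈ Ideal.span (Set.range v) ^ (t' + 1) := by
        refine PowRegAux.colon_of_qr ?_ hvreg (fun s _ => PowRegAux.qr_all s) hfg
        intro c hc
        rw [hspanv] at hc ⊢
        exact colonFact (r - 1) (by omega) c hc
      rw [hspanv] at hgJ
      exact Ideal.mul_mem_mul (Ideal.mem_span_singleton_self _) hgJ
    · refine le_inf ?_ ?_
      · refine Ideal.mul_mono_right ?_
        calc Ideal.span (u '' {i : Fin r | (i : ℕ) < r - 1}) ^ (t' + 1)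
            ≤ Ideal.span (Set.range u) ^ (t' + 1) :=
              Ideal.pow_right_mono (Ideal.span_mono (Set.image_subset_range _ _)) _
          _ ≤ Ideal.span (Set.range u) ^ t' := Ideal.pow_le_pow_right (by omega)
      · exact Ideal.mul_le_right
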